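/- Let A be a discrete p-primary module of cofinite type over a profinite group G with a G-stable twisting: for s ∈ Z_p let Z_p(s) be Z_p with γ ∈ G ≅ Z_p acting by multiplication by κ(γ)^s for a fixed isomorphism κ: G ≅ 1 + pZ_p, and A(s) = A ⊗ Z_p(s). If M is a cofinitely generated torsion Z_p[[G]]-module (G ≅ Z_p), then for all but finitely many s ∈ Z_p, the invariants (M(s))^G are finite. -/

import Mathlib

/- STATEMENT 12 (Greenberg's twisting lemma): Let `G ≅ ℤ_p` with fixed isomorphism
`κ : G ≅ 1 + pℤ_p`, and let `M` be a cofinitely generated cotorsion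
`Λ = ℤ_p[[G]] ≅ ℤ_p[[T]]`-module, i.e. its Pontryagin dual `X = M^∨` is a finitely
generated torsion `Λ`-module.  Then for all but finitely many `s ∈ ℤ_p` the invariants
`(M(s))^G` are finite.  We formalize this on the dual side: `(M(s))^G` is finite iff its
Pontryagin dual `X/(c·γ - 1)X` is finite, where `γ = 1 + T` is the group-like element
corresponding to the topological generator of `G` and `c = κ(γ)^s`; moreover
`s ↦ κ(γ)^s` is a bijection of `ℤ_p` onto `1 + pℤ_p`.  So the claim reads: the set of
`c ∈ 1 + pℤ_p` for which `X/((c(1+T) - 1)X)` is infinite is finite. -/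


open PowerSeries

variable {p : ℕ} [Fact p.Prime]

/-- `g c = C c * (1+X) - 1`, the twisted group element minus 1. -/
noncomputable def gP (p : ℕ) [Fact p.Prime] (c : ℤ_[p]) : PowerSeries ℤ_[p] :=
  PowerSeries.C c * (1 + PowerSeries.X) - 1

lemma gP_eq (c : ℤ_[p]) :
    gP p c = PowerSeries.C (c - 1) + PowerSeries.C c * PowerSeries.X := by
  simp only [gP, map_sub, map_one]
  ring

lemma toZMod_eq_one {c : ℤ_[p]} (hc : (p : ℤ_[p]) ∣ c - 1) :
    PadicInt.toZMod (c - 1) = 0 := by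
  have : c - 1 ∈ RingHom.ker (PadicInt.toZMod : ℤ_[p] →+* ZMod p) := by
    rw [PadicInt.ker_toZMod, PadicInt.maximalIdeal_eq_span_p, Ideal.mem_span_singleton]
    exact hc
  exact this

lemma map_gP {c : ℤ_[p]} (hc : (p : ℤ_[p]) ∣ c - 1) :
    PowerSeries.map (PadicInt.toZMod : ℤ_[p] →+* ZMod p) (gP p c) = PowerSeries.X := by
  have h1 : PadicInt.toZMod c = 1 := by
    have := toZMod_eq_one hc
    rw [map_sub, map_one, sub_eq_zero] at this
    exact this
  rw [gP_eq, map_add, map_mul, PowerSeries.map_C, PowerSeries.map_X, map_sub, map_one]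
  simp [h1]

/-- c = 1 + (c-1) is a unit when p ∣ c - 1. -/
lemma isUnit_c {c : ℤ_[p]} (hc : (p : ℤ_[p]) ∣ c - 1) : IsUnit c := by
  obtain ⟨d, hd⟩ := hc
  have hpd : ‖(p : ℤ_[p]) * d‖ < 1 := by
    calc ‖(p : ℤ_[p]) * d‖ = ‖(p : ℤ_[p])‖ * ‖d‖ := norm_mul _ _
    _ ≤ ‖(p : ℤ_[p])‖ * 1 := by
        exact mul_le_mul_of_nonneg_left (PadicInt.norm_le_one d) (norm_nonneg _)
    _ = (p : ℝ)⁻¹ := by rw [mul_one, PadicInt.norm_p]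
    _ < 1 := by
        rw [inv_lt_one_iff₀]
        right
        exact_mod_cast (Fact.out : p.Prime).one_lt
  have : c = 1 + (p : ℤ_[p]) * d := by rw [← hd]; ring
  rw [PadicInt.isUnit_iff, this]
  have h1 : ‖(1 : ℤ_[p])‖ = 1 := norm_one
  have hne : ‖(1 : ℤ_[p])‖ ≠ ‖(p : ℤ_[p]) * d‖ := by rw [h1]; exact fun h => absurd (h ▸ hpd) (lt_irrefl _)
  rw [PadicInt.norm_add_eq_max_of_ne hne, h1]
  exact max_eq_left hpd.le

/-- If all coefficients map to zero mod p, the power series is divisible by `C p`. -/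
lemma exists_of_map_zero {h : PowerSeries ℤ_[p]}
    (hh : PowerSeries.map (PadicInt.toZMod : ℤ_[p] →+* ZMod p) h = 0) :
    ∃ h' : PowerSeries ℤ_[p], h = PowerSeries.C (p : ℤ_[p]) * h' := by
  have hdvd : ∀ n, (p : ℤ_[p]) ∣ PowerSeries.coeff n h := by
    intro n
    have : PadicInt.toZMod (PowerSeries.coeff n h) = 0 := by
      have := congrArg (PowerSeries.coeff n) hh
      rwa [PowerSeries.coeff_map, map_zero] at this
    have hker : PowerSeries.coeff n h ∈ RingHom.ker (PadicInt.toZMod : ℤ_[p] →+* ZMod p) :=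
      this
    rwa [PadicInt.ker_toZMod, PadicInt.maximalIdeal_eq_span_p, Ideal.mem_span_singleton] at hker
  refine ⟨PowerSeries.mk (fun n => (hdvd n).choose), ?_⟩
  ext n
  rw [PowerSeries.coeff_C_mul, PowerSeries.coeff_mk]
  exact (hdvd n).choose_spec.trans rfl

/-- One step of p-divisibility for `C z = g * h`. -/
lemma step_one {c z : ℤ_[p]} {h : PowerSeries ℤ_[p]} (hc : (p : ℤ_[p]) ∣ c - 1)
    (hzh : PowerSeries.C z = gP p c * h) :
    ∃ z' h', z = (p : ℤ_[p]) * z' ∧ PowerSeries.C z' = gP p c * h' := by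
  have hmap := congrArg (PowerSeries.map (PadicInt.toZMod : ℤ_[p] →+* ZMod p)) hzh
  rw [map_mul, map_gP hc, PowerSeries.map_C] at hmap
  -- coefficients: C z̄ = X * map h
  have hz0 : PadicInt.toZMod z = 0 := by
    have := congrArg (PowerSeries.coeff 0) hmap
    simpa using this
  have hmh : PowerSeries.map (PadicInt.toZMod : ℤ_[p] →+* ZMod p) h = 0 := by
    ext n
    have := congrArg (PowerSeries.coeff (n + 1)) hmap
    rw [PowerSeries.coeff_C] at this
    simp only [Nat.add_eq_zero, one_ne_zero, and_false, if_false] at this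
    rw [PowerSeries.coeff_succ_X_mul] at this
    simpa using this.symm
  obtain ⟨h', hh'⟩ := exists_of_map_zero hmh
  have hzdvd : (p : ℤ_[p]) ∣ z := by
    have : z ∈ RingHom.ker (PadicInt.toZMod : ℤ_[p] →+* ZMod p) := hz0
    rwa [PadicInt.ker_toZMod, PadicInt.maximalIdeal_eq_span_p, Ideal.mem_span_singleton] at this
  obtain ⟨z', hz'⟩ := hzdvd
  refine ⟨z', h', hz', ?_⟩
  have : PowerSeries.C ((p : ℤ_[p])) * PowerSeries.C z' =
      PowerSeries.C ((p : ℤ_[p])) * (gP p c * h') := by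
    rw [← map_mul, ← hz', hzh, hh']; ring
  have hpne : PowerSeries.C ((p : ℤ_[p])) ≠ 0 := by
    intro hEq
    have : ((p : ℤ_[p])) = 0 := by
      have := congrArg (PowerSeries.constantCoeff) hEq
      simpa using this
    exact (Nat.cast_ne_zero (R := ℤ_[p])).mpr (Fact.out : p.Prime).ne_zero (by exact_mod_cast this)
  exact mul_left_cancel₀ hpne this

/-- Uniqueness: if `C z ∈ (g)` then `z = 0`. -/
lemma eq_zero_of_C_eq {c z : ℤ_[p]} (hc : (p : ℤ_[p]) ∣ c - 1)
    (hzh : ∃ h, PowerSeries.C z = gP p c * h) : z = 0 := by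
  have key : ∀ k : ℕ, ∀ w : ℤ_[p], (∃ h, PowerSeries.C w = gP p c * h) →
      (p : ℤ_[p]) ^ k ∣ w := by
    intro k
    induction k with
    | zero => intro w _; simp
    | succ k ih =>
      intro w ⟨h, hw⟩
      obtain ⟨z', h', hz', hrec⟩ := step_one hc hw
      obtain ⟨y, hy⟩ := ih z' ⟨h', hrec⟩
      exact ⟨y, by rw [hz', hy]; ring⟩
  by_contra hz
  obtain ⟨k, hk⟩ : ∃ k : ℕ, ((p : ℝ))⁻¹ ^ k < ‖z‖ := by
    have h0 : (0 : ℝ) < ‖z‖ := norm_pos_iff.mpr hz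
    have hlt : ((p : ℝ))⁻¹ < 1 := by
      rw [inv_lt_one_iff₀]; right; exact_mod_cast (Fact.out : p.Prime).one_lt
    obtain ⟨k, hk⟩ := exists_pow_lt_of_lt_one h0 hlt
    exact ⟨k, hk⟩
  obtain ⟨y, hy⟩ := key k z hzh
  have : ‖z‖ ≤ ((p : ℝ))⁻¹ ^ k := by
    rw [hy, norm_mul, norm_pow, PadicInt.norm_p]
    calc ((p:ℝ))⁻¹ ^ k * ‖y‖ ≤ ((p:ℝ))⁻¹ ^ k * 1 := by
          exact mul_le_mul_of_nonneg_left (PadicInt.norm_le_one y) (by positivity)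
    _ = ((p:ℝ))⁻¹ ^ k := mul_one _
  exact absurd (lt_of_lt_of_le hk this) (lt_irrefl _)

lemma summable_aux (t : ℕ → ℤ_[p]) (ht : ∀ k, ‖t k‖ ≤ ((p : ℝ))⁻¹ ^ k) : Summable t := by
  refine Summable.of_norm (Summable.of_nonneg_of_le (fun k => norm_nonneg _) ht ?_)
  refine summable_geometric_of_lt_one (by positivity) ?_
  rw [inv_lt_one_iff₀]; right; exact_mod_cast (Fact.out : p.Prime).one_lt

/-- Existence: every `F` is congruent to a constant mod `(g)`. -/
lemma exists_rep {c : ℤ_[p]} (hc : (p : ℤ_[p]) ∣ c - 1) (F : PowerSeries ℤ_[p]) :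
    ∃ z h, F = PowerSeries.C z + gP p c * h := by
  obtain ⟨u, hu⟩ := isUnit_c hc
  have hc1 : ‖c - 1‖ ≤ ((p : ℝ))⁻¹ := by
    obtain ⟨d, hd⟩ := hc
    rw [hd, norm_mul, PadicInt.norm_p]
    calc ((p:ℝ))⁻¹ * ‖d‖ ≤ ((p:ℝ))⁻¹ * 1 :=
          mul_le_mul_of_nonneg_left (PadicInt.norm_le_one d) (by positivity)
    _ = ((p:ℝ))⁻¹ := mul_one _
  have hbound : ∀ (j : ℕ) (x : ℤ_[p]) (k : ℕ),
      ‖((u⁻¹ : ℤ_[p]ˣ) : ℤ_[p]) ^ j * (-(c - 1)) ^ k * x‖ ≤ ((p : ℝ))⁻¹ ^ k := by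
    intro j x k
    rw [norm_mul, norm_mul, norm_pow, norm_pow,
      PadicInt.norm_units, one_pow, one_mul, norm_neg]
    calc ‖c - 1‖ ^ k * ‖x‖ ≤ ((p:ℝ))⁻¹ ^ k * 1 := by
          apply mul_le_mul (pow_le_pow_left₀ (norm_nonneg _) hc1 k) (PadicInt.norm_le_one x)
            (norm_nonneg _) (by positivity)
    _ = ((p:ℝ))⁻¹ ^ k := mul_one _
  set w : ℕ → ℤ_[p] := fun n =>
    ∑' k : ℕ, ((u⁻¹ : ℤ_[p]ˣ) : ℤ_[p]) ^ (k + 1) * (-(c - 1)) ^ k *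
      PowerSeries.coeff (n + 1 + k) F with hw
  have hsumm : ∀ n, Summable (fun k : ℕ => ((u⁻¹ : ℤ_[p]ˣ) : ℤ_[p]) ^ (k + 1) * (-(c - 1)) ^ k *
      PowerSeries.coeff (n + 1 + k) F) := fun n => summable_aux _ (fun k => hbound _ _ _)
  have hsumm' : ∀ n, Summable (fun k : ℕ => ((u⁻¹ : ℤ_[p]ˣ) : ℤ_[p]) ^ k * (-(c - 1)) ^ k *
      PowerSeries.coeff (n + 1 + k) F) := fun n => summable_aux _ (fun k => hbound _ _ _)
  -- the key recurrence:  c * w n = coeff (n+1) F - (c-1) * w (n+1)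
  have hrec : ∀ n : ℕ, c * w n = PowerSeries.coeff (n + 1) F - (c - 1) * w (n + 1) := by
    intro n
    have h1 : c * w n = ∑' k : ℕ, ((u⁻¹ : ℤ_[p]ˣ) : ℤ_[p]) ^ k * (-(c - 1)) ^ k *
        PowerSeries.coeff (n + 1 + k) F := by
      rw [hw]
      dsimp only
      rw [← Summable.tsum_mul_left c (hsumm n)]
      apply tsum_congr
      intro k
      have : c * (((u⁻¹ : ℤ_[p]ˣ) : ℤ_[p]) ^ (k + 1)) = ((u⁻¹ : ℤ_[p]ˣ) : ℤ_[p]) ^ k := by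
        rw [pow_succ, ← hu]
        have : ((u : ℤ_[p]) * ((u⁻¹ : ℤ_[p]ˣ) : ℤ_[p])) = 1 := by
          rw [← Units.val_mul, mul_inv_cancel, Units.val_one]
        calc (u : ℤ_[p]) * (((u⁻¹ : ℤ_[p]ˣ) : ℤ_[p]) ^ k * ((u⁻¹ : ℤ_[p]ˣ) : ℤ_[p]))
            = ((u : ℤ_[p]) * ((u⁻¹ : ℤ_[p]ˣ) : ℤ_[p])) * ((u⁻¹ : ℤ_[p]ˣ) : ℤ_[p]) ^ k := by ring
        _ = ((u⁻¹ : ℤ_[p]ˣ) : ℤ_[p]) ^ k := by rw [this, one_mul]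
      rw [← mul_assoc, ← mul_assoc, this]
    rw [h1, Summable.tsum_eq_zero_add (hsumm' n)]
    simp only [pow_zero, one_mul, add_zero]
    have h2 : ∀ k : ℕ, ((u⁻¹ : ℤ_[p]ˣ) : ℤ_[p]) ^ (k + 1) * (-(c - 1)) ^ (k + 1) *
        PowerSeries.coeff (n + 1 + (k + 1)) F
        = (-(c - 1)) * (((u⁻¹ : ℤ_[p]ˣ) : ℤ_[p]) ^ (k + 1) * (-(c - 1)) ^ k *
          PowerSeries.coeff ((n + 1) + 1 + k) F) := by
      intro k
      have : n + 1 + (k + 1) = (n + 1) + 1 + k := by omega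
      rw [this]
      ring
    have hs2 : Summable (fun k : ℕ => ((u⁻¹ : ℤ_[p]ˣ) : ℤ_[p]) ^ (k + 1) * (-(c - 1)) ^ k *
        PowerSeries.coeff ((n + 1) + 1 + k) F) := summable_aux _ (fun k => hbound _ _ _)
    rw [tsum_congr h2, Summable.tsum_mul_left _ hs2]
    rw [hw]
    ring
  refine ⟨PowerSeries.coeff 0 F - (c - 1) * w 0, PowerSeries.mk w, ?_⟩
  ext n
  rw [gP_eq]
  cases n with
  | zero =>
    simp only [map_add, PowerSeries.coeff_zero_eq_constantCoeff, map_mul, map_sub]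
    simp [PowerSeries.coeff_mk]
  | succ n =>
    rw [map_add, PowerSeries.coeff_C]
    simp only [Nat.succ_ne_zero, if_false, zero_add]
    rw [add_mul, map_add, PowerSeries.coeff_C_mul, PowerSeries.coeff_mk, mul_assoc,
      PowerSeries.coeff_C_mul, PowerSeries.coeff_succ_X_mul, PowerSeries.coeff_mk]
    have := hrec n
    linear_combination -this

/-- Evaluation of a power series mod `(gP p c)`, the unique constant congruent to it. -/
noncomputable def eval1 {c : ℤ_[p]} (hc : (p : ℤ_[p]) ∣ c - 1) (F : PowerSeries ℤ_[p]) : ℤ_[p] :=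
  (exists_rep hc F).choose

lemma eval1_spec {c : ℤ_[p]} (hc : (p : ℤ_[p]) ∣ c - 1) (F : PowerSeries ℤ_[p]) :
    ∃ h, F = PowerSeries.C (eval1 hc F) + gP p c * h :=
  (exists_rep hc F).choose_spec

lemma eval1_unique {c : ℤ_[p]} (hc : (p : ℤ_[p]) ∣ c - 1) {F : PowerSeries ℤ_[p]} {z : ℤ_[p]}
    {h : PowerSeries ℤ_[p]} (hF : F = PowerSeries.C z + gP p c * h) :
    eval1 hc F = z := by
  obtain ⟨h', hh'⟩ := eval1_spec hc F
  have heq : PowerSeries.C (eval1 hc F - z) = gP p c * (h - h') := by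
    rw [map_sub]
    linear_combination hF - hh'
  exact sub_eq_zero.mp (eq_zero_of_C_eq hc ⟨h - h', heq⟩)

lemma eval1_C {c : ℤ_[p]} (hc : (p : ℤ_[p]) ∣ c - 1) (z : ℤ_[p]) :
    eval1 hc (PowerSeries.C z) = z :=
  eval1_unique hc (by rw [mul_zero, add_zero])

lemma eval1_dvd_iff {c : ℤ_[p]} (hc : (p : ℤ_[p]) ∣ c - 1) {F : PowerSeries ℤ_[p]} :
    gP p c ∣ F ↔ eval1 hc F = 0 := by
  constructor
  · rintro ⟨h, rfl⟩
    exact eval1_unique hc (by rw [map_zero, zero_add])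
  · intro hz
    obtain ⟨h, hh⟩ := eval1_spec hc F
    rw [hz, map_zero, zero_add] at hh
    exact ⟨h, hh⟩

lemma eval1_mul {c : ℤ_[p]} (hc : (p : ℤ_[p]) ∣ c - 1) (F G : PowerSeries ℤ_[p]) :
    eval1 hc (F * G) = eval1 hc F * eval1 hc G := by
  obtain ⟨h1, hh1⟩ := eval1_spec hc F
  obtain ⟨h2, hh2⟩ := eval1_spec hc G
  refine eval1_unique hc (h := PowerSeries.C (eval1 hc F) * h2 +
    PowerSeries.C (eval1 hc G) * h1 + gP p c * h1 * h2) ?_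
  rw [map_mul]
  nth_rewrite 1 [hh1, hh2]
  ring

lemma eval1_add {c : ℤ_[p]} (hc : (p : ℤ_[p]) ∣ c - 1) (F G : PowerSeries ℤ_[p]) :
    eval1 hc (F + G) = eval1 hc F + eval1 hc G := by
  obtain ⟨h1, hh1⟩ := eval1_spec hc F
  obtain ⟨h2, hh2⟩ := eval1_spec hc G
  refine eval1_unique hc (h := h1 + h2) ?_
  rw [map_add]
  nth_rewrite 1 [hh1, hh2]
  ring

lemma eval1_one {c : ℤ_[p]} (hc : (p : ℤ_[p]) ∣ c - 1) : eval1 hc 1 = 1 := by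
  have := eval1_C hc 1
  rwa [map_one] at this

lemma eval1_gP {c : ℤ_[p]} (hc : (p : ℤ_[p]) ∣ c - 1) : eval1 hc (gP p c) = 0 :=
  (eval1_dvd_iff hc).mp dvd_rfl

lemma eval1_oneX {c : ℤ_[p]} (hc : (p : ℤ_[p]) ∣ c - 1) :
    c * eval1 hc (1 + PowerSeries.X) = 1 := by
  have h1 : PowerSeries.C c * (1 + PowerSeries.X) = 1 + gP p c := by
    rw [gP]; ring
  have h2 := eval1_mul hc (PowerSeries.C c) (1 + PowerSeries.X)
  rw [h1] at h2
  rw [eval1_add hc, eval1_one hc, eval1_gP hc, eval1_C hc] at h2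
  rw [← h2]; ring

lemma gP_ne_zero {c : ℤ_[p]} (hc : (p : ℤ_[p]) ∣ c - 1) : gP p c ≠ 0 := by
  intro h
  have h1 : PowerSeries.coeff 1 (gP p c) = c := by
    rw [gP_eq, map_add, PowerSeries.coeff_C, PowerSeries.coeff_C_mul, PowerSeries.coeff_one_X]
    simp
  rw [h, map_zero] at h1
  exact (isUnit_c hc).ne_zero h1.symm

lemma gP_prime {c : ℤ_[p]} (hc : (p : ℤ_[p]) ∣ c - 1) : Prime (gP p c) := by
  refine ⟨gP_ne_zero hc, ?_, ?_⟩
  · intro hu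
    have := (eval1_dvd_iff hc).mp (isUnit_iff_dvd_one.mp hu)
    rw [eval1_one hc] at this
    exact one_ne_zero this
  · intro a b hab
    have := (eval1_dvd_iff hc).mp hab
    rw [eval1_mul hc] at this
    rcases mul_eq_zero.mp this with h | h
    · exact Or.inl ((eval1_dvd_iff hc).mpr h)
    · exact Or.inr ((eval1_dvd_iff hc).mpr h)

lemma gP_not_dvd {c c' : ℤ_[p]} (hc : (p : ℤ_[p]) ∣ c - 1) (hc' : (p : ℤ_[p]) ∣ c' - 1)
    (hne : c ≠ c') : ¬ gP p c ∣ gP p c' := by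
  intro hdvd
  have h0 := (eval1_dvd_iff hc).mp hdvd
  have h1 : gP p c' = PowerSeries.C c' * (1 + PowerSeries.X) - 1 := rfl
  have h2 : gP p c' + 1 = PowerSeries.C c' * (1 + PowerSeries.X) := by rw [h1]; ring
  have h3 := eval1_add hc (gP p c') 1
  rw [h2, eval1_mul hc, eval1_C hc, eval1_one hc, h0, zero_add] at h3
  have h4 := eval1_oneX hc
  have h5 : (c - c') * eval1 hc (1 + PowerSeries.X) = 0 := by
    linear_combination h4 - h3
  rcases mul_eq_zero.mp h5 with h | h
  · exact hne (sub_eq_zero.mp h)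
  · rw [h, mul_zero] at h4
    exact one_ne_zero h4.symm

lemma prod_dvd {t : Finset ℤ_[p]} {f : PowerSeries ℤ_[p]}
    (h1 : ∀ c ∈ t, (p : ℤ_[p]) ∣ c - 1) (h2 : ∀ c ∈ t, gP p c ∣ f) :
    (∏ c ∈ t, gP p c) ∣ f := by
  classical
  induction t using Finset.induction_on with
  | empty => simpa using one_dvd f
  | insert _ _ hnotmem _ =>
    rename_i a s ih
    have hprod : (∏ c ∈ s, gP p c) ∣ f :=
      ih (fun c hct => h1 c (Finset.mem_insert_of_mem hct))
        (fun c hct => h2 c (Finset.mem_insert_of_mem hct))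
    obtain ⟨h, hh⟩ := hprod
    have hca : (p : ℤ_[p]) ∣ a - 1 := h1 a (Finset.mem_insert_self a s)
    have hga : gP p a ∣ (∏ c ∈ s, gP p c) * h := hh ▸ h2 a (Finset.mem_insert_self a s)
    have hnd : ¬ gP p a ∣ ∏ c ∈ s, gP p c := by
      intro hd
      obtain ⟨b, hbs, hdb⟩ := (gP_prime hca).exists_mem_finset_dvd hd
      have hab : a ≠ b := fun h => hnotmem (h ▸ hbs)
      exact gP_not_dvd hca (h1 b (Finset.mem_insert_of_mem hbs)) hab hdb
    have hdh : gP p a ∣ h := ((gP_prime hca).2.2 _ _ hga).resolve_left hnd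
    obtain ⟨h', hh'⟩ := hdh
    rw [Finset.prod_insert hnotmem]
    exact ⟨h', by rw [hh, hh']; ring⟩

lemma zero_of_all_pow_dvd {z : ℤ_[p]} (h : ∀ k : ℕ, (p : ℤ_[p]) ^ k ∣ z) : z = 0 := by
  by_contra hz
  obtain ⟨k, hk⟩ : ∃ k : ℕ, ((p : ℝ))⁻¹ ^ k < ‖z‖ := by
    have h0 : (0 : ℝ) < ‖z‖ := norm_pos_iff.mpr hz
    have hlt : ((p : ℝ))⁻¹ < 1 := by
      rw [inv_lt_one_iff₀]; right; exact_mod_cast (Fact.out : p.Prime).one_lt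
    exact exists_pow_lt_of_lt_one h0 hlt
  obtain ⟨y, hy⟩ := h k
  have : ‖z‖ ≤ ((p : ℝ))⁻¹ ^ k := by
    rw [hy, norm_mul, norm_pow, PadicInt.norm_p]
    calc ((p:ℝ))⁻¹ ^ k * ‖y‖ ≤ ((p:ℝ))⁻¹ ^ k * 1 :=
          mul_le_mul_of_nonneg_left (PadicInt.norm_le_one y) (by positivity)
    _ = ((p:ℝ))⁻¹ ^ k := mul_one _
  exact absurd (lt_of_lt_of_le hk this) (lt_irrefl _)

/-- Extract the largest power of `p` from a nonzero power series. -/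
lemma exists_primitive {f : PowerSeries ℤ_[p]} (hf : f ≠ 0) :
    ∃ (a : ℕ) (f₀ : PowerSeries ℤ_[p]), f = PowerSeries.C ((p : ℤ_[p]) ^ a) * f₀ ∧
      PowerSeries.map (PadicInt.toZMod : ℤ_[p] →+* ZMod p) f₀ ≠ 0 := by
  obtain ⟨m₀, hm₀⟩ : ∃ m₀, PowerSeries.coeff m₀ f ≠ 0 := by
    by_contra h
    push_neg at h
    exact hf (PowerSeries.ext h)
  obtain ⟨K, hK⟩ : ∃ K : ℕ, ¬ ((p : ℤ_[p]) ^ K ∣ PowerSeries.coeff m₀ f) := by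
    by_contra h
    push_neg at h
    exact hm₀ (zero_of_all_pow_dvd h)
  clear hf hm₀
  induction K generalizing f with
  | zero => exact absurd (by simpa using (dvd_refl (1 : ℤ_[p])).trans (one_dvd _)) hK
  | succ K ih =>
    by_cases hmap : PowerSeries.map (PadicInt.toZMod : ℤ_[p] →+* ZMod p) f = 0
    · obtain ⟨f₁, hf₁⟩ := exists_of_map_zero hmap
      have hc1 : PowerSeries.coeff m₀ f = (p : ℤ_[p]) * PowerSeries.coeff m₀ f₁ := by
        rw [hf₁, PowerSeries.coeff_C_mul]
      have hK1 : ¬ ((p : ℤ_[p]) ^ K ∣ PowerSeries.coeff m₀ f₁) := by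
        intro ⟨y, hy⟩
        exact hK ⟨y, by rw [hc1, hy]; ring⟩
      obtain ⟨a, f₀, hfa, hf₀⟩ := ih hK1
      exact ⟨a + 1, f₀, by rw [hf₁, hfa, ← mul_assoc, ← map_mul, ← pow_succ'], hf₀⟩
    · exact ⟨0, f, by rw [pow_zero, map_one, one_mul], hmap⟩

/-- Cancel powers of `p` against a divisor whose reduction is nonzero. -/
lemma dvd_primitive {a : ℕ} {f₀ q h : PowerSeries ℤ_[p]}
    (hq : PowerSeries.map (PadicInt.toZMod : ℤ_[p] →+* ZMod p) q ≠ 0)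
    (heq : PowerSeries.C ((p : ℤ_[p]) ^ a) * f₀ = q * h) :
    q ∣ f₀ := by
  induction a generalizing h with
  | zero =>
    rw [pow_zero, map_one, one_mul] at heq
    exact ⟨h, heq⟩
  | succ a ih =>
    have hmap := congrArg (PowerSeries.map (PadicInt.toZMod : ℤ_[p] →+* ZMod p)) heq
    rw [map_mul, map_mul, PowerSeries.map_C] at hmap
    have hp0 : PadicInt.toZMod ((p : ℤ_[p]) ^ (a + 1)) = 0 := by
      rw [map_pow]
      have : PadicInt.toZMod ((p : ℤ_[p])) = 0 := by
        rw [map_natCast, ZMod.natCast_self]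
      rw [this, zero_pow (Nat.succ_ne_zero a)]
    rw [hp0, map_zero, zero_mul] at hmap
    have hmh : PowerSeries.map (PadicInt.toZMod : ℤ_[p] →+* ZMod p) h = 0 := by
      rcases mul_eq_zero.mp hmap.symm with h' | h'
      · exact absurd h' hq
      · exact h'
    obtain ⟨h₁, hh₁⟩ := exists_of_map_zero hmh
    have hpne : PowerSeries.C ((p : ℤ_[p])) ≠ 0 := by
      intro hEq
      have : ((p : ℤ_[p])) = 0 := by
        have := congrArg (PowerSeries.constantCoeff) hEq
        simpa using this
      exact (Nat.cast_ne_zero (R := ℤ_[p])).mpr (Fact.out : p.Prime).ne_zero (by exact_mod_cast this)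
    have hcan : PowerSeries.C ((p : ℤ_[p]) ^ a) * f₀ = q * h₁ := by
      apply mul_left_cancel₀ hpne
      calc PowerSeries.C ((p : ℤ_[p])) * (PowerSeries.C ((p : ℤ_[p]) ^ a) * f₀)
          = PowerSeries.C ((p : ℤ_[p]) ^ (a + 1)) * f₀ := by rw [← mul_assoc, ← map_mul, ← pow_succ']
      _ = q * (PowerSeries.C ((p : ℤ_[p])) * h₁) := by rw [heq, hh₁]
      _ = PowerSeries.C ((p : ℤ_[p])) * (q * h₁) := by ring
    exact ih hcan

/-- A finitely generated torsion module has a nonzero annihilating element. -/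
lemma exists_ann (M : Type*) [AddCommGroup M] [Module (PowerSeries ℤ_[p]) M]
    [Module.Finite (PowerSeries ℤ_[p]) M]
    (htor : Module.IsTorsion (PowerSeries ℤ_[p]) M) :
    ∃ f : PowerSeries ℤ_[p], f ≠ 0 ∧ ∀ x : M, f • x = 0 := by
  classical
  obtain ⟨n, s, hs⟩ := Module.Finite.exists_fin (R := PowerSeries ℤ_[p]) (M := M)
  choose r hr using fun i => htor (x := s i)
  refine ⟨∏ i : Fin n, (r i : PowerSeries ℤ_[p]), ?_, ?_⟩
  · have : (∏ i : Fin n, (r i : PowerSeries ℤ_[p])) ∈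
        nonZeroDivisors (PowerSeries ℤ_[p]) :=
      Submonoid.prod_mem _ (fun i _ => (r i).2)
    exact nonZeroDivisors.ne_zero this
  · have hr' : ∀ i, ((r i : PowerSeries ℤ_[p])) • s i = 0 := fun i => by
      rw [← Submonoid.smul_def]; exact hr i
    intro x
    have hx : x ∈ Submodule.span (PowerSeries ℤ_[p]) (Set.range s) := hs ▸ Submodule.mem_top
    induction hx using Submodule.span_induction with
    | mem y hy =>
      obtain ⟨i, rfl⟩ := hy
      rw [← Finset.mul_prod_erase Finset.univ _ (Finset.mem_univ i), mul_comm, mul_smul,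
        hr' i, smul_zero]
    | zero => rw [smul_zero]
    | add y z _ _ hy hz => rw [smul_add, hy, hz, add_zero]
    | smul a y _ hy => rw [smul_comm, hy, smul_zero]

/-- If `gP p c` does not divide an annihilator of the f.g. module `M`, then
`M ⧸ (gP p c) M` is finite. -/
lemma finite_quot (M : Type*) [AddCommGroup M] [Module (PowerSeries ℤ_[p]) M]
    [Module.Finite (PowerSeries ℤ_[p]) M] {c : ℤ_[p]} (hc : (p : ℤ_[p]) ∣ c - 1)
    {f : PowerSeries ℤ_[p]} (hfk : ∀ x : M, f • x = 0) (hnd : ¬ gP p c ∣ f) :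
    Finite (M ⧸ (Ideal.span {gP p c} • (⊤ : Submodule (PowerSeries ℤ_[p]) M))) := by
  classical
  set N := Ideal.span {gP p c} • (⊤ : Submodule (PowerSeries ℤ_[p]) M) with hN
  -- images of multiples of g vanish in the quotient
  have hg0 : ∀ (h : PowerSeries ℤ_[p]) (x : M),
      (Submodule.Quotient.mk ((gP p c * h) • x) : M ⧸ N) = 0 := by
    intro h x
    rw [Submodule.Quotient.mk_eq_zero]
    exact Submodule.smul_mem_smul (Ideal.mem_span_singleton.mpr ⟨h, rfl⟩) Submodule.mem_top
  have hz : eval1 hc f ≠ 0 := fun h => hnd ((eval1_dvd_iff hc).mpr h)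
  set z := eval1 hc f with hzdef
  -- C z kills the quotient
  have hCz : ∀ q : M ⧸ N, (PowerSeries.C z) • q = 0 := by
    intro q
    obtain ⟨x, rfl⟩ := Submodule.Quotient.mk_surjective N q
    obtain ⟨h, hh⟩ := eval1_spec hc f
    have : (PowerSeries.C z) • x = f • x - (gP p c * h) • x := by
      rw [hh]; rw [add_smul]; abel
    rw [← Submodule.Quotient.mk_smul, this, Submodule.Quotient.mk_sub, hg0, hfk,
      Submodule.Quotient.mk_zero, sub_zero]
  -- so does C (p^k)
  set k := z.valuation with hk
  clear_value k
  clear_value z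
  have hpk : ∀ q : M ⧸ N, (PowerSeries.C ((p : ℤ_[p]) ^ k)) • q = 0 := by
    intro q
    have hspec := PadicInt.unitCoeff_spec hz
    have key : ((PadicInt.unitCoeff hz : ℤ_[p]ˣ) : ℤ_[p]) * ((p : ℤ_[p]) ^ k) = z := by
      rw [hk]; exact hspec.symm
    have hinv : (((PadicInt.unitCoeff hz)⁻¹ : ℤ_[p]ˣ) : ℤ_[p]) * z = (p : ℤ_[p]) ^ k := by
      apply mul_left_cancel₀ (Units.ne_zero (PadicInt.unitCoeff hz))
      rw [← mul_assoc, ← Units.val_mul, mul_inv_cancel, Units.val_one, one_mul, key]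
    rw [← hinv, map_mul, mul_smul, hCz, smul_zero]
  -- generators
  obtain ⟨n, s, hs⟩ := Module.Finite.exists_fin (R := PowerSeries ℤ_[p]) (M := M)
  have hgen : ∀ q : M ⧸ N, ∃ w : Fin n → ℤ_[p],
      q = ∑ i, (PowerSeries.C (w i)) • (Submodule.Quotient.mk (s i) : M ⧸ N) := by
    intro q
    obtain ⟨x, rfl⟩ := Submodule.Quotient.mk_surjective N q
    have hx : x ∈ Submodule.span (PowerSeries ℤ_[p]) (Set.range s) := hs ▸ Submodule.mem_top
    obtain ⟨lam, hlam⟩ := (Submodule.mem_span_range_iff_exists_fun _).mp hx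
    refine ⟨fun i => eval1 hc (lam i), ?_⟩
    rw [← hlam, ← Submodule.mkQ_apply, map_sum]
    apply Finset.sum_congr rfl
    intro i _
    obtain ⟨h, hh⟩ := eval1_spec hc (lam i)
    rw [Submodule.mkQ_apply, ← Submodule.Quotient.mk_smul]
    rw [hh, add_smul, Submodule.Quotient.mk_add, hg0, add_zero, Submodule.Quotient.mk_smul]
  -- surjection from a finite type
  haveI : NeZero (p ^ k) := ⟨pow_ne_zero _ (Fact.out : p.Prime).ne_zero⟩
  set φ : (Fin n → ZMod (p ^ k)) → (M ⧸ N) := fun v =>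
    ∑ i, (PowerSeries.C (((v i).val : ℤ_[p]))) • (Submodule.Quotient.mk (s i) : M ⧸ N)
    with hphi
  have hsurj : Function.Surjective φ := by
    intro q
    obtain ⟨w, hw⟩ := hgen q
    refine ⟨fun i => PadicInt.toZModPow k (w i), ?_⟩
    rw [hphi]
    dsimp only
    rw [hw]
    apply Finset.sum_congr rfl
    intro i _
    -- w i - cast of val is in (p^k)
    have hker : w i - (((PadicInt.toZModPow k (w i)).val : ℕ) : ℤ_[p]) ∈
        Ideal.span {(p : ℤ_[p]) ^ k} := by
      rw [← PadicInt.ker_toZModPow, RingHom.mem_ker, map_sub, map_natCast,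
        ZMod.natCast_val, ZMod.cast_id, sub_self]
    obtain ⟨y, hy⟩ := Ideal.mem_span_singleton.mp hker
    have hsplit : w i = (((PadicInt.toZModPow k (w i)).val : ℕ) : ℤ_[p]) + (p : ℤ_[p]) ^ k * y := by
      rw [← hy]; ring
    have hCeq : PowerSeries.C (w i) =
        PowerSeries.C ((((PadicInt.toZModPow k (w i)).val : ℕ)) : ℤ_[p]) +
        PowerSeries.C ((p : ℤ_[p]) ^ k) * PowerSeries.C y := by
      rw [← map_mul, ← map_add]
      exact congrArg _ hsplit
    rw [hCeq, add_smul, mul_comm, mul_smul, hpk, smul_zero, add_zero]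
  exact Finite.of_surjective φ hsurj


theorem stmt_12 (p : ℕ) [Fact p.Prime]
    (X : Type*) [AddCommGroup X] [Module (PowerSeries ℤ_[p]) X]
    [Module.Finite (PowerSeries ℤ_[p]) X]
    (htor : Module.IsTorsion (PowerSeries ℤ_[p]) X) :
    {c : ℤ_[p] | (∃ d : ℤ_[p], c = 1 + p * d) ∧
      ¬ Finite (X ⧸ (Ideal.span
          {PowerSeries.C c * (1 + PowerSeries.X) - 1} •
        (⊤ : Submodule (PowerSeries ℤ_[p]) X)))}.Finite := by
  classical
  obtain ⟨f, hf0, hfk⟩ := exists_ann X htor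
  obtain ⟨a, f₀, hfa, hf₀⟩ := exists_primitive hf0
  obtain ⟨M, hM⟩ : ∃ M, PowerSeries.coeff M
      (PowerSeries.map (PadicInt.toZMod : ℤ_[p] →+* ZMod p) f₀) ≠ 0 := by
    by_contra h
    push_neg at h
    exact hf₀ (PowerSeries.ext h)
  by_contra hS
  have hinf : Set.Infinite _ := hS
  obtain ⟨t, hts, htc⟩ := Set.Infinite.exists_subset_card_eq hinf (M + 1)
  have hct : ∀ c ∈ t, (p : ℤ_[p]) ∣ c - 1 := by
    intro c hc0
    obtain ⟨⟨d, hd⟩, -⟩ := hts hc0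
    exact ⟨d, by rw [hd]; ring⟩
  have hdvd : ∀ c ∈ t, gP p c ∣ f := by
    intro c hc0
    obtain ⟨⟨d, hd⟩, hnfin⟩ := hts hc0
    by_contra hnd
    exact hnfin (finite_quot X (⟨d, by rw [hd]; ring⟩) hfk hnd)
  obtain ⟨h, hh⟩ := prod_dvd hct hdvd
  rw [hfa] at hh
  have hqmap : PowerSeries.map (PadicInt.toZMod : ℤ_[p] →+* ZMod p) (∏ c ∈ t, gP p c)
      = PowerSeries.X ^ (M + 1) := by
    rw [map_prod, Finset.prod_congr rfl (fun c hc0 => map_gP (hct c hc0)),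
      Finset.prod_const, htc]
  have hqne : PowerSeries.map (PadicInt.toZMod : ℤ_[p] →+* ZMod p) (∏ c ∈ t, gP p c) ≠ 0 := by
    rw [hqmap]
    exact pow_ne_zero _ PowerSeries.X_ne_zero
  obtain ⟨h', hh'⟩ := dvd_primitive hqne hh
  have hzero : PowerSeries.coeff M
      (PowerSeries.map (PadicInt.toZMod : ℤ_[p] →+* ZMod p) f₀) = 0 := by
    have hdX : PowerSeries.X ^ (M + 1) ∣
        PowerSeries.map (PadicInt.toZMod : ℤ_[p] →+* ZMod p) f₀ := by
      rw [hh', map_mul, hqmap]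
      exact Dvd.intro _ rfl
    exact (PowerSeries.X_pow_dvd_iff.mp hdX) M (Nat.lt_succ_self M)
  exact hM hzero
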